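/- arXiv:math/0607692 — 3 statements merged into one kernel-verified Lean document; each statement's English description precedes it below -/
import Mathlib

section
/- Let α > 1 be a real number and β a real number. A positive integer m > β belongs to the Beatty sequence B_{α,β} (i.e., m = ⌊αn + β⌋ for some positive integer n) if and only if 0 < {α^{−1}(m − β + 1)} ≤ α^{−1}, where {t} denotes the fractional part of t; and in this case m = ⌊αn + β⌋ holds if and only if n = ⌈α^{−1}(m − β)⌉. -/
/-- Characterization of members of the Beatty sequence B_{α,β} for α > 1:
a positive integer m > β belongs to the sequence iff
0 < {α⁻¹(m − β + 1)} ≤ α⁻¹, and in that case m = ⌊αn + β⌋ iff n = ⌈α⁻¹(m − β)⌉. -/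
theorem beatty_membership_characterization
    (α β : ℝ) (hα : 1 < α) (m : ℤ) (hm : 0 < m) (hmβ : β < (m : ℝ)) :
    ((∃ n : ℕ, 0 < n ∧ m = ⌊α * n + β⌋) ↔
      (0 < Int.fract (α⁻¹ * ((m : ℝ) - β + 1)) ∧
        Int.fract (α⁻¹ * ((m : ℝ) - β + 1)) ≤ α⁻¹)) ∧
    ((0 < Int.fract (α⁻¹ * ((m : ℝ) - β + 1)) ∧
        Int.fract (α⁻¹ * ((m : ℝ) - β + 1)) ≤ α⁻¹) →
      ∀ n : ℕ, 0 < n → (m = ⌊α * n + β⌋ ↔ (n : ℤ) = ⌈α⁻¹ * ((m : ℝ) - β)⌉)) := by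
  have hα0 : (0:ℝ) < α := lt_trans one_pos hα
  have hα0' : (0:ℝ) < α⁻¹ := inv_pos.2 hα0
  have hα1 : α⁻¹ < 1 := by rw [inv_eq_one_div, div_lt_one hα0]; exact hα
  set x : ℝ := α⁻¹ * ((m : ℝ) - β) with hxdef
  set y : ℝ := α⁻¹ * ((m : ℝ) - β + 1) with hydef
  have hyx : y = x + α⁻¹ := by rw [hxdef, hydef]; ring
  have hfy : (⌊y⌋:ℝ) + Int.fract y = y := Int.floor_add_fract y
  have hx0 : 0 < x := mul_pos hα0' (by linarith)
  have key : ∀ n : ℤ, (m = ⌊α * (n:ℝ) + β⌋ ↔ (x ≤ (n:ℝ) ∧ (n:ℝ) < y)) := by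
    intro n
    rw [eq_comm, Int.floor_eq_iff, hxdef, hydef]
    constructor
    · rintro ⟨h1, h2⟩
      constructor
      · rw [← div_eq_inv_mul, div_le_iff₀ hα0]; push_cast; nlinarith
      · rw [← div_eq_inv_mul, lt_div_iff₀ hα0]; push_cast; nlinarith
    · rintro ⟨h1, h2⟩
      rw [← div_eq_inv_mul, div_le_iff₀ hα0] at h1
      rw [← div_eq_inv_mul, lt_div_iff₀ hα0] at h2
      push_cast at h1 h2 ⊢
      constructor <;> nlinarith
  -- from the fract condition, derive the bracketing of ⌊y⌋
  have bridge : (0 < Int.fract y ∧ Int.fract y ≤ α⁻¹) →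
      x ≤ (⌊y⌋:ℝ) ∧ (⌊y⌋:ℝ) < y := by
    rintro ⟨h1, h2⟩
    constructor
    · linarith
    · linarith
  constructor
  · constructor
    · rintro ⟨n, hn, hmn⟩
      have hmn' : m = ⌊α * (((n:ℤ)):ℝ) + β⌋ := by push_cast; exact_mod_cast hmn
      obtain ⟨hk1, hk2⟩ := (key (n:ℤ)).mp hmn'
      have hfl : ((n:ℤ):ℝ) ≤ (⌊y⌋:ℝ) := by exact_mod_cast Int.le_floor.2 hk2.le
      constructor
      · rcases lt_or_eq_of_le (Int.fract_nonneg y) with h | h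
        · exact h
        · exfalso
          have hyint : y = (⌊y⌋:ℝ) := by linarith
          have h3 : ((n:ℤ):ℝ) < (⌊y⌋:ℝ) := by linarith
          have h4 : (n:ℤ) < ⌊y⌋ := by exact_mod_cast h3
          have h5 : ((n:ℤ):ℝ) + 1 ≤ (⌊y⌋:ℝ) := by exact_mod_cast h4
          linarith
      · linarith
    · intro hc
      obtain ⟨hb1, hb2⟩ := bridge hc
      have hpos : 0 < ⌊y⌋ := by exact_mod_cast lt_of_lt_of_le hx0 hb1
      refine ⟨⌊y⌋.toNat, by omega, ?_⟩
      have hcast : ((⌊y⌋.toNat : ℕ) : ℝ) = ((⌊y⌋:ℤ) : ℝ) := by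
        exact_mod_cast congrArg (Int.cast : ℤ → ℝ) (Int.toNat_of_nonneg hpos.le)
      rw [hcast]
      exact (key ⌊y⌋).mpr ⟨hb1, hb2⟩
  · intro hc n hn
    obtain ⟨hb1, hb2⟩ := bridge hc
    have hceil : ⌈x⌉ = ⌊y⌋ := by
      apply le_antisymm
      · exact Int.ceil_le.2 hb1
      · have h3 : (⌊y⌋:ℝ) < (⌈x⌉:ℝ) + 1 := by
          have := Int.le_ceil x
          linarith
        have h4 : ⌊y⌋ < ⌈x⌉ + 1 := by exact_mod_cast h3
        omega
    constructor
    · intro hmn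
      have hmn' : m = ⌊α * (((n:ℤ)):ℝ) + β⌋ := by push_cast; exact_mod_cast hmn
      obtain ⟨hk1, hk2⟩ := (key (n:ℤ)).mp hmn'
      have hc1 : ⌈x⌉ ≤ (n:ℤ) := Int.ceil_le.2 hk1
      have hc2 : (n:ℤ) ≤ ⌈x⌉ := by
        have h3 : ((n:ℤ):ℝ) < (⌈x⌉:ℝ) + 1 := by
          have := Int.le_ceil x
          linarith
        have h4 : (n:ℤ) < ⌈x⌉ + 1 := by exact_mod_cast h3
        omega
      omega
    · intro hn'
      have hne : (n:ℤ) = ⌊y⌋ := hn'.trans hceil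
      have hcast : ((n:ℕ):ℝ) = ((⌊y⌋:ℤ):ℝ) := by exact_mod_cast congrArg (Int.cast : ℤ → ℝ) hne
      have := (key ⌊y⌋).mpr ⟨hb1, hb2⟩
      rw [show ((n:ℕ):ℝ) = ((⌊y⌋:ℤ):ℝ) from hcast]
      exact this
end

section
/- Let c be fixed with 1 < c < 2. For all sufficiently large real L and M, if ℓ and m are integers with L/2 < ℓ ≤ L, M/2 < m ≤ M, and 1 − 1/(2(LM)^{1 − 1/c}) ≤ {ℓ^{1/c} m^{1/c}}, then the integer n = ⌊ℓ^{1/c} m^{1/c}⌋ + 1 satisfies ⌊n^c⌋ = ℓm. -/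
set_option maxHeartbeats 1600000


/-- Let 1 < c < 2. For all sufficiently large L and M, if ℓ, m are integers with
L/2 < ℓ ≤ L, M/2 < m ≤ M and 1 − 1/(2(LM)^{1−1/c}) ≤ {ℓ^{1/c} m^{1/c}}, then
n = ⌊ℓ^{1/c} m^{1/c}⌋ + 1 satisfies ⌊n^c⌋ = ℓm. -/
theorem floor_power_hits_product
    (c : ℝ) (hc1 : 1 < c) (hc2 : c < 2) :
    ∃ L₀ : ℝ, ∀ L M : ℝ, L₀ ≤ L → L₀ ≤ M →
      ∀ ℓ m : ℕ, L / 2 < (ℓ : ℝ) → (ℓ : ℝ) ≤ L → M / 2 < (m : ℝ) → (m : ℝ) ≤ M →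
        1 - 1 / (2 * (L * M) ^ (1 - 1 / c)) ≤
          Int.fract ((ℓ : ℝ) ^ (1 / c) * (m : ℝ) ^ (1 / c)) →
        ⌊((⌊(ℓ : ℝ) ^ (1 / c) * (m : ℝ) ^ (1 / c)⌋₊ + 1 : ℕ) : ℝ) ^ c⌋₊ = ℓ * m := by
  have hc0 : (0:ℝ) < c := by linarith
  have h2c : (0:ℝ) < 2 - c := by linarith
  refine ⟨max 2 (2 * c / (2 - c)), fun L M hL hM ℓ m hℓ1 hℓ2 hm1 hm2 hfr => ?_⟩
  have hL2 : (2:ℝ) ≤ L := le_trans (le_max_left _ _) hL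
  have hM2 : (2:ℝ) ≤ M := le_trans (le_max_left _ _) hM
  have hℓ0 : (1:ℝ) ≤ (ℓ:ℝ) := (lt_of_le_of_lt (by linarith) hℓ1).le
  have hm0 : (1:ℝ) ≤ (m:ℝ) := (lt_of_le_of_lt (by linarith) hm1).le
  set x : ℝ := (ℓ : ℝ) ^ (1 / c) * (m : ℝ) ^ (1 / c) with hxdef
  have hx_eq : x = ((ℓ:ℝ) * m) ^ (1 / c) := by
    rw [hxdef, ← Real.mul_rpow (by positivity) (by positivity)]
  have hℓm1 : (1:ℝ) ≤ (ℓ:ℝ) * m := by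
    have := mul_le_mul hℓ0 hm0 zero_le_one (by linarith : (0:ℝ) ≤ (ℓ:ℝ))
    linarith
  have hx1 : (1:ℝ) ≤ x := by
    rw [hx_eq]; exact Real.one_le_rpow hℓm1 (by positivity)
  have hx0 : (0:ℝ) ≤ x := by linarith
  have hx_pow : x ^ c = (ℓ:ℝ) * m := by
    rw [hx_eq, ← Real.rpow_mul (by positivity), one_div, inv_mul_cancel₀ hc0.ne',
      Real.rpow_one]
  set n : ℕ := ⌊x⌋₊ + 1 with hndef
  have hN : (n:ℝ) = (⌊x⌋₊ : ℝ) + 1 := by rw [hndef]; push_cast; ring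
  have hxN : x < (n:ℝ) := by rw [hN]; exact Nat.lt_floor_add_one x
  have hNx : (n:ℝ) ≤ x + 1 := by rw [hN]; linarith [Nat.floor_le hx0]
  have hN1 : (1:ℝ) ≤ (n:ℝ) := by linarith
  have hN0 : (0:ℝ) < (n:ℝ) := by linarith
  set δ : ℝ := (n:ℝ) - x with hδdef
  have hδ0 : 0 < δ := by simp only [hδdef]; linarith
  have hfract : Int.fract x = x - (⌊x⌋₊:ℝ) := by
    rw [Int.fract, natCast_floor_eq_intCast_floor hx0]
  have hδfr : δ = 1 - Int.fract x := by rw [hδdef, hN, hfract]; ring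
  have hδ1 : δ ≤ 1 := by rw [hδfr]; linarith [Int.fract_nonneg x]
  set ε : ℝ := 1 / (2 * (L * M) ^ (1 - 1 / c)) with hεdef
  have hδε : δ ≤ ε := by rw [hδfr]; linarith [hfr]
  set A : ℝ := (L * M) ^ (1 / c) with hAdef
  have hLM0 : (0:ℝ) < L * M := mul_pos (by linarith) (by linarith)
  have hA0 : (0:ℝ) < A := Real.rpow_pos_of_pos hLM0 _
  have hApow : A ^ (c - 1) = (L * M) ^ (1 - 1 / c) := by
    rw [hAdef, ← Real.rpow_mul hLM0.le]
    congr 1; field_simp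
  have hAL₀ : max 2 (2 * c / (2 - c)) ≤ A := by
    set t := max 2 (2 * c / (2 - c)) with htdef
    have ht2 : (2:ℝ) ≤ t := le_max_left _ _
    have h1 : t ^ c ≤ t ^ (2:ℝ) := Real.rpow_le_rpow_of_exponent_le (by linarith) hc2.le
    have h2 : t ^ (2:ℝ) ≤ L * M := by
      have ht : t ^ (2:ℝ) = t * t := by
        rw [show (2:ℝ) = ((2:ℕ):ℝ) by norm_num, Real.rpow_natCast]; ring
      rw [ht]
      have htL : t ≤ L := hL
      have htM : t ≤ M := hM
      exact mul_le_mul htL htM (by linarith) (by linarith)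
    have h3 := Real.rpow_le_rpow (by positivity) (h1.trans h2) (by positivity : (0:ℝ) ≤ 1/c)
    rwa [← Real.rpow_mul (by positivity), mul_one_div, div_self hc0.ne',
      Real.rpow_one] at h3
  have hA2 : (2:ℝ) ≤ A := le_trans (le_max_left _ _) hAL₀
  have hAc : 2 * c / (2 - c) ≤ A := le_trans (le_max_right _ _) hAL₀
  have hxA : x ≤ A := by
    rw [hx_eq, hAdef]
    exact Real.rpow_le_rpow (by positivity) (mul_le_mul hℓ2 hm2 (by linarith) (by linarith)) (by positivity)
  have hNA : (n:ℝ) ≤ A + 1 := by linarith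
  -- Bernoulli
  have hs : (-1:ℝ) ≤ -(δ / n) := by
    have : δ / n ≤ 1 := div_le_one_of_le₀ (by linarith) (by linarith)
    linarith
  have hber := one_add_mul_self_le_rpow_one_add hs hc1.le
  have h1s : 1 + -(δ / n) = x / n := by
    rw [hδdef]; field_simp; ring
  rw [h1s] at hber
  have hNc0 : (0:ℝ) < (n:ℝ) ^ c := Real.rpow_pos_of_pos hN0 c
  have hdivc : (x / n) ^ c = x ^ c / (n:ℝ) ^ c := Real.div_rpow hx0 hN0.le c
  have key : (n:ℝ) ^ c ≤ x ^ c + c * δ * (n:ℝ) ^ (c - 1) := by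
    have h4 : (1 + c * -(δ / n)) * (n:ℝ) ^ c ≤ x ^ c := by
      calc (1 + c * -(δ / n)) * (n:ℝ) ^ c ≤ (x / n) ^ c * (n:ℝ) ^ c :=
            mul_le_mul_of_nonneg_right hber hNc0.le
        _ = x ^ c := by rw [hdivc]; field_simp
    have h5 : (n:ℝ) ^ (c - 1) = (n:ℝ) ^ c / n := by
      rw [Real.rpow_sub hN0, Real.rpow_one]
    rw [h5]
    have h6 : (1 + c * -(δ / n)) * (n:ℝ) ^ c
        = (n:ℝ) ^ c - c * δ * ((n:ℝ) ^ c / n) := by ring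
    rw [h6] at h4
    linarith
  -- the remainder bound
  have hc1' : (0:ℝ) ≤ c - 1 := by linarith
  have hNcA : (n:ℝ) ^ (c - 1) ≤ (A + 1) ^ (c - 1) :=
    Real.rpow_le_rpow hN0.le hNA hc1'
  have hratio : (A + 1) ^ (c - 1) / A ^ (c - 1) ≤ (A + 1) / A := by
    have hb1 : (1:ℝ) ≤ (A + 1) / A := by
      rw [le_div_iff₀ hA0]; linarith
    have := Real.rpow_le_rpow_of_exponent_le hb1 (by linarith : c - 1 ≤ 1)
    rwa [Real.rpow_one, Real.div_rpow (by linarith) hA0.le] at this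
  have hA1c0 : (0:ℝ) < A ^ (c - 1) := Real.rpow_pos_of_pos hA0 _
  have hεA : ε = 1 / (2 * A ^ (c - 1)) := by rw [hεdef, hApow]
  have hrem : c * δ * (n:ℝ) ^ (c - 1) < 1 := by
    have hε0 : 0 < ε := by rw [hεA]; positivity
    have hb1 : c * δ * (n:ℝ) ^ (c - 1) ≤ c * ε * (A + 1) ^ (c - 1) :=
      mul_le_mul (mul_le_mul_of_nonneg_left hδε hc0.le) hNcA
        (Real.rpow_pos_of_pos hN0 _).le (by positivity)
    have hb2 : c * ε * (A + 1) ^ (c - 1) = c / 2 * ((A + 1) ^ (c - 1) / A ^ (c - 1)) := by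
      rw [hεA]; field_simp
    have hb3 : c / 2 * ((A + 1) / A) < 1 := by
      have hkey : c * (A + 1) < 2 * A := by
        have h7 := (div_le_iff₀ h2c).mp hAc
        have h8 : A * (2 - c) = 2 * A - A * c := by ring
        linarith
      have heq : c / 2 * ((A + 1) / A) = c * (A + 1) / (2 * A) := by ring
      rw [heq, div_lt_one (by positivity)]
      exact hkey
    have hb4 : c / 2 * ((A + 1) ^ (c - 1) / A ^ (c - 1)) ≤ c / 2 * ((A + 1) / A) :=
      mul_le_mul_of_nonneg_left hratio (by positivity)
    linarith
  have hupper : (n:ℝ) ^ c < (ℓ:ℝ) * m + 1 := by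
    rw [← hx_pow]; linarith
  have hlower : (ℓ:ℝ) * m ≤ (n:ℝ) ^ c := by
    rw [← hx_pow]; exact Real.rpow_le_rpow hx0 hxN.le hc0.le
  rw [Nat.floor_eq_iff (by positivity)]
  constructor
  · rw [Nat.cast_mul]; exact hlower
  · rw [Nat.cast_mul]; exact hupper
end

section
/- For every non-integer real number c > 1 and every odd prime p, there exists a positive integer n such that ⌊n^c⌋ is a quadratic non-residue modulo p; that is, N_c(p) exists (is finite). -/
open Filter Set

noncomputable section PS

/-- Finite difference on real functions. -/
def dR (f : ℝ → ℝ) : ℝ → ℝ := fun x => f (x+1) - f x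

/-- Finite difference on sequences. -/
def dN (s : ℕ → ℝ) : ℕ → ℝ := fun n => s (n+1) - s n

lemma dN_iter_eq (f : ℝ → ℝ) : ∀ (j : ℕ) (n : ℕ),
    (dN^[j] (fun m : ℕ => f m)) n = (dR^[j] f) n := by
  intro j
  induction j with
  | zero => intro n; simp
  | succ j ih =>
    intro n
    rw [Function.iterate_succ_apply', Function.iterate_succ_apply']
    have h1 := ih (n+1)
    have h2 := ih n
    simp only [dN, dR, h2]
    rw [h1]
    push_cast
    ring_nf

lemma dR_iter_hasDerivAt : ∀ (j : ℕ) (f f' : ℝ → ℝ),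
    (∀ t : ℝ, 0 < t → HasDerivAt f (f' t) t) →
    ∀ x : ℝ, 0 < x → HasDerivAt (dR^[j] f) ((dR^[j] f') x) x := by
  intro j
  induction j with
  | zero => intro f f' hf x hx; simpa using hf x hx
  | succ j ih =>
    intro f f' hf x hx
    rw [Function.iterate_succ_apply, Function.iterate_succ_apply]
    refine ih (dR f) (dR f') ?_ x hx
    intro t ht
    have h1 : HasDerivAt (fun u : ℝ => f (u+1)) (f' (t+1)) t := by
      have := (hf (t+1) (by linarith)).comp t ((hasDerivAt_id t).add_const 1)
      simpa [Function.comp_def] using this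
    exact h1.sub (hf t ht)

lemma dR_iter_pow : ∀ (j : ℕ) (A γ : ℝ), 0 < A → (j : ℝ) - 1 < γ →
    ∀ x : ℝ, 1 ≤ x → ∃ ξ : ℝ, x ≤ ξ ∧ ξ ≤ x + j ∧
      (dR^[j] (fun t => A * t ^ γ)) x
        = A * (∏ i ∈ Finset.range j, (γ - i)) * ξ ^ (γ - j) := by
  intro j
  induction j with
  | zero =>
    intro A γ hA hγ x hx
    exact ⟨x, le_refl x, by simp, by simp⟩
  | succ j ih =>
    intro A γ hA hγ x hx
    have hγ0 : 0 < γ := by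
      have : (j : ℝ) ≥ 0 := Nat.cast_nonneg j
      push_cast at hγ
      linarith
    -- derivative function
    set g : ℝ → ℝ := fun t => (A * γ) * t ^ (γ - 1) with hg
    have hderiv : ∀ t : ℝ, 0 < t → HasDerivAt (fun t => A * t ^ γ) (g t) t := by
      intro t ht
      have := (Real.hasDerivAt_rpow_const (p := γ) (Or.inl ht.ne')).const_mul A
      simpa [hg, mul_assoc, mul_comm, mul_left_comm] using this
    -- MVT on dR^[j] f between x and x+1
    have hx0 : (0:ℝ) < x := lt_of_lt_of_le one_pos hx
    have hcont : ContinuousOn (dR^[j] (fun t => A * t ^ γ)) (Icc x (x+1)) := by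
      intro t ht
      have ht0 : 0 < t := lt_of_lt_of_le hx0 ht.1
      exact (dR_iter_hasDerivAt j _ g hderiv t ht0).continuousAt.continuousWithinAt
    have hd : ∀ t ∈ Ioo x (x+1),
        HasDerivAt (dR^[j] (fun t => A * t ^ γ)) ((dR^[j] g) t) t := by
      intro t ht
      exact dR_iter_hasDerivAt j _ g hderiv t (lt_trans hx0 ht.1)
    obtain ⟨ξ1, hξ1, hslope⟩ :=
      exists_hasDerivAt_eq_slope (dR^[j] (fun t => A * t ^ γ)) (dR^[j] g)
        (by linarith : x < x + 1) hcont hd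
    have hval : (dR^[j+1] (fun t => A * t ^ γ)) x = (dR^[j] g) ξ1 := by
      rw [Function.iterate_succ_apply']
      have : dR (dR^[j] fun t => A * t ^ γ) x
          = (dR^[j] (fun t => A * t ^ γ)) (x+1) - (dR^[j] (fun t => A * t ^ γ)) x := rfl
      rw [this, hslope]
      norm_num
    -- apply IH to g at ξ1
    have hA' : 0 < A * γ := mul_pos hA hγ0
    have hγ' : (j : ℝ) - 1 < γ - 1 := by push_cast at hγ ⊢; linarith
    have hξ1x : 1 ≤ ξ1 := le_trans hx (le_of_lt hξ1.1)
    obtain ⟨ξ, hξa, hξb, hξv⟩ := ih (A * γ) (γ - 1) hA' hγ' ξ1 hξ1x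
    refine ⟨ξ, le_trans (le_of_lt hξ1.1) hξa, ?_, ?_⟩
    · push_cast
      have : ξ1 + j ≤ x + 1 + j := by linarith [hξ1.2]
      linarith [hξb]
    · rw [hval, hξv]
      have hprod : (∏ i ∈ Finset.range (j+1), (γ - i))
          = γ * ∏ i ∈ Finset.range j, ((γ - 1) - i) := by
        rw [Finset.prod_range_succ']
        simp only [Nat.cast_add, Nat.cast_one]
        rw [mul_comm]
        congr 1
        · norm_num
        · apply Finset.prod_congr rfl
          intro i _
          push_cast
          ring
      rw [hprod]
      have hexp : γ - 1 - (j:ℝ) = γ - ((j:ℕ)+1:ℕ) := by push_cast; ring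
      rw [← hexp]
      ring

/-- Partial-sum walk of fractional parts. -/
def walkT (s : ℕ → ℝ) (n0 : ℕ) (j : ℕ) : ℝ :=
  Int.fract (s n0) + ∑ i ∈ Finset.range j, Int.fract (dN s (n0 + i))

lemma walkT_succ (s : ℕ → ℝ) (n0 j : ℕ) :
    walkT s n0 (j+1) = walkT s n0 j + Int.fract (dN s (n0 + j)) := by
  simp only [walkT, Finset.sum_range_succ]
  ring

/-- Main density engine: if `dN^[k] s → ∞` and `dN^[k+1] s → 0`, then the
fractional parts of `s` visit any subinterval of `[0,1]` in arbitrarily long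
runs, arbitrarily late. -/
lemma runs : ∀ (k : ℕ) (s : ℕ → ℝ),
    Tendsto (dN^[k] s) atTop atTop → Tendsto (dN^[k+1] s) atTop (nhds 0) →
    ∀ θ ε : ℝ, 0 ≤ θ → 0 < ε → θ + ε ≤ 1 → ∀ L N : ℕ,
    ∃ n, N ≤ n ∧ ∀ j ≤ L, Int.fract (s (n+j)) ∈ Set.Ioo θ (θ+ε) := by
  intro k
  induction k with
  | zero =>
    intro s hs hds θ ε hθ hε hθε L N
    simp only [Function.iterate_one, Function.iterate_zero, id] at hs hds
    set η : ℝ := ε / (8 * (L+1)) with hηdef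
    have hη : 0 < η := by positivity
    have hLη : (L:ℝ) * η ≤ ε / 8 := by
      have heq : (L:ℝ) * (ε / (8 * ((L:ℝ)+1))) = ε * L / (8*((L:ℝ)+1)) := by ring
      rw [hηdef, heq, div_le_div_iff₀ (by positivity) (by norm_num)]
      nlinarith [hε.le, (Nat.cast_nonneg L : (0:ℝ) ≤ (L:ℝ))]
    have hev : ∀ᶠ n in atTop, |dN s n| < η :=
      (hds.eventually (eventually_abs_sub_lt 0 hη)).mono (by intro n h; simpa using h)
    obtain ⟨N1', hN1'⟩ := eventually_atTop.mp hev
    set N1 : ℕ := max N1' N with hN1def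
    have hstep : ∀ n ≥ N1, |s (n+1) - s n| < η := by
      intro n hn
      exact hN1' n (le_trans (le_max_left _ _) hn)
    set m : ℤ := ⌈s N1⌉ with hm
    set A : ℝ := (m:ℝ) + θ + ε/2 with hA
    have hsN1A : s N1 ≤ A := by
      have := Int.le_ceil (s N1)
      rw [hA]; linarith
    have hex : ∃ j : ℕ, A < s (N1 + j) := by
      have := (hs.eventually (eventually_gt_atTop A))
      obtain ⟨M, hM⟩ := eventually_atTop.mp this
      exact ⟨max M N1 + 1 - N1, by
        have h1 : N1 + (max M N1 + 1 - N1) = max M N1 + 1 := by omega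
        rw [h1]; exact hM _ (le_trans (le_max_left _ _) (Nat.le_succ _))⟩
    set j1 : ℕ := Nat.find hex with hj1
    have hj1P : A < s (N1 + j1) := Nat.find_spec hex
    have hj1pos : 0 < j1 := by
      rcases Nat.eq_zero_or_pos j1 with h | h
      · exfalso; rw [h] at hj1P; simp at hj1P; linarith
      · exact h
    set n0 : ℕ := N1 + j1 with hn0
    have hprev : s (n0 - 1) ≤ A := by
      have := Nat.find_min hex (m := j1 - 1) (by omega)
      push_neg at this
      have heq : n0 - 1 = N1 + (j1 - 1) := by omega
      rw [heq]; exact this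
    have hn0N1 : n0 - 1 ≥ N1 := by omega
    have hsn0 : s n0 < A + η := by
      have h1 : s n0 - s (n0 - 1) ≤ |s ((n0-1)+1) - s (n0-1)| := by
        have : (n0 - 1) + 1 = n0 := by omega
        rw [this]
        exact le_abs_self _
      have := hstep (n0 - 1) hn0N1
      have h2 : (n0-1)+1 = n0 := by omega
      rw [h2] at this
      have := lt_of_le_of_lt h1 (by rw [← h2] at this ⊢; exact this)
      linarith [hprev]
    -- triangle bound
    have htri : ∀ j : ℕ, |s (n0 + j) - s n0| ≤ j * η := by
      intro j
      induction j with
      | zero => simp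
      | succ j ih =>
        have h1 : |s (n0 + j + 1) - s (n0 + j)| < η := by
          have := hstep (n0 + j) (by omega)
          exact this
        calc |s (n0 + (j+1)) - s n0|
            = |(s (n0 + j + 1) - s (n0 + j)) + (s (n0 + j) - s n0)| := by
              ring_nf
        _ ≤ |s (n0 + j + 1) - s (n0 + j)| + |s (n0 + j) - s n0| := abs_add_le _ _
        _ ≤ η + j * η := add_le_add h1.le ih
        _ = ((j:ℕ)+1 : ℕ) * η := by push_cast; ring
    refine ⟨n0, by omega, ?_⟩
    intro j hj
    have hjη : (j:ℝ) * η ≤ ε/8 := by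
      have : (j:ℝ) * η ≤ (L:ℝ) * η :=
        mul_le_mul_of_nonneg_right (by exact_mod_cast hj) hη.le
      linarith
    have hηε : η ≤ ε / 8 := by
      have hL0 : (0:ℝ) ≤ (L:ℝ) := Nat.cast_nonneg L
      rw [hηdef, div_le_div_iff₀ (by positivity) (by norm_num)]
      nlinarith [hε.le]
    have habs := abs_sub_lt_iff.mp
      (lt_of_le_of_lt (htri j) (lt_of_le_of_lt hjη (by linarith : ε/8 < ε/8 + η)))
    rw [hA] at hj1P
    rw [hA] at hsn0
    have hub : s (n0 + j) < (m:ℝ) + θ + (7/8)*ε := by linarith [habs.1]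
    have hlb : (m:ℝ) + θ + ε/4 < s (n0 + j) := by linarith [habs.2]
    have hval : Int.fract (s (n0+j)) = s (n0+j) - m := by
      rw [Int.fract_eq_iff]
      refine ⟨by linarith, by linarith, ⟨m, by ring⟩⟩
    rw [hval]
    exact ⟨by linarith, by linarith⟩
  | succ k ih =>
    intro s hs hds θ ε hθ hε hθε L N
    -- apply IH to dN s
    have hs' : Tendsto (dN^[k] (dN s)) atTop atTop := by
      rwa [← Function.iterate_succ_apply] 
    have hds' : Tendsto (dN^[k+1] (dN s)) atTop (nhds 0) := by
      rwa [← Function.iterate_succ_apply]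
    set β : ℝ := ε / (8 * (L+1)) with hβdef
    have hβ : 0 < β := by positivity
    have hβε : β ≤ ε / 8 := by
      rw [hβdef, div_le_div_iff₀ (by positivity) (by norm_num)]
      nlinarith [hε.le, (Nat.cast_nonneg L : (0:ℝ) ≤ (L:ℝ))]
    have hε1 : ε ≤ 1 := by linarith
    have h2β1 : β + β ≤ 1 := by linarith
    set L' : ℕ := ⌈(3:ℝ)/β⌉₊ + L with hL'
    obtain ⟨n0, hn0N, hrun⟩ := ih (dN s) hs' hds' β β hβ.le hβ h2β1 L' N
    -- walk
    obtain ⟨T, hTdef⟩ : ∃ T : ℕ → ℝ, T = walkT s n0 := ⟨_, rfl⟩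
    have hTsucc : ∀ j, T (j+1) = T j + Int.fract (dN s (n0 + j)) := by
      intro j; rw [hTdef]; exact walkT_succ s n0 j
    have hT0 : T 0 < 1 := by
      rw [hTdef]
      simp only [walkT, Finset.range_zero, Finset.sum_empty, add_zero]
      exact Int.fract_lt_one _
    have hT0nn : 0 ≤ T 0 := by
      rw [hTdef]
      simp only [walkT, Finset.range_zero, Finset.sum_empty, add_zero]
      exact Int.fract_nonneg _
    have hTint : ∀ j : ℕ, ∃ z : ℤ, s (n0 + j) = T j + z := by
      intro j
      induction j with
      | zero =>
        refine ⟨⌊s n0⌋, ?_⟩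
        rw [hTdef]
        simp only [walkT, Finset.range_zero, Finset.sum_empty, add_zero, Nat.add_zero]
        rw [Int.fract]
        ring
      | succ j ihz =>
        obtain ⟨z, hz⟩ := ihz
        refine ⟨z + ⌊dN s (n0 + j)⌋, ?_⟩
        have h1 : s (n0 + (j+1)) = s (n0 + j) + dN s (n0 + j) := by
          simp only [dN]
          have heq : n0 + (j+1) = (n0+j)+1 := by omega
          rw [heq]
          ring
        rw [h1, hz, hTsucc, Int.fract]
        push_cast
        ring
    have hstepmem : ∀ j ≤ L', Int.fract (dN s (n0 + j)) ∈ Set.Ioo β (β + β) := hrun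
    have hTmono : ∀ j, T j ≤ T (j+1) := by
      intro j; rw [hTsucc]; linarith [Int.fract_nonneg (dN s (n0 + j))]
    have hTlb : ∀ j ≤ L' + 1, (j:ℝ) * β ≤ T j := by
      intro j hj
      induction j with
      | zero => simpa using hT0nn
      | succ j ihj =>
        have h1 := ihj (by omega)
        have h2 := (hstepmem j (by omega)).1
        rw [hTsucc]
        push_cast
        linarith
    have hex : ∃ j : ℕ, 1 + θ + ε/2 < T j := by
      refine ⟨⌈(3:ℝ)/β⌉₊, ?_⟩
      have h1 : (3:ℝ)/β ≤ (⌈(3:ℝ)/β⌉₊ : ℝ) := Nat.le_ceil _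
      have h2 : (3:ℝ) ≤ (⌈(3:ℝ)/β⌉₊ : ℝ) * β := by
        rw [div_le_iff₀ hβ] at h1; linarith
      have h3 := hTlb ⌈(3:ℝ)/β⌉₊ (by omega)
      linarith
    have hfound : ∃ j0 : ℕ, (1 + θ + ε/2 < T j0) ∧ j0 ≤ ⌈(3:ℝ)/β⌉₊ ∧ 0 < j0 ∧
        T (j0 - 1) ≤ 1 + θ + ε/2 := by
      refine ⟨Nat.find hex, Nat.find_spec hex, ?_, ?_, ?_⟩
      · refine Nat.find_min' hex ?_
        have h1 : (3:ℝ)/β ≤ (⌈(3:ℝ)/β⌉₊ : ℝ) := Nat.le_ceil _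
        have h2 : (3:ℝ) ≤ (⌈(3:ℝ)/β⌉₊ : ℝ) * β := by
          rw [div_le_iff₀ hβ] at h1; linarith
        have h3 := hTlb ⌈(3:ℝ)/β⌉₊ (by omega)
        linarith
      · rcases Nat.eq_zero_or_pos (Nat.find hex) with h | h
        · exfalso
          have := Nat.find_spec hex
          rw [h] at this
          linarith
        · exact h
      · rcases Nat.eq_zero_or_pos (Nat.find hex) with h | h
        · exfalso
          have := Nat.find_spec hex
          rw [h] at this
          linarith
        · have hm := Nat.find_min hex (m := Nat.find hex - 1) (by omega)
          push_neg at hm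
          exact hm
    obtain ⟨j0, hj0P, hj0le, hj0pos, hprev⟩ := hfound
    have hTj0ub : T j0 ≤ 1 + θ + ε/2 + (β + β) := by
      have heq : j0 = (j0 - 1) + 1 := by omega
      rw [heq, hTsucc]
      have := (hstepmem (j0-1) (by omega)).2
      have heq2 : j0 - 1 + 1 - 1 = j0 - 1 := by omega
      rw [heq2] at *
      linarith
    have hTub : ∀ i : ℕ, i ≤ L → T (j0 + i) ≤ T j0 + (i:ℝ) * (β + β) := by
      intro i hi
      induction i with
      | zero => simp
      | succ i ihi =>
        have h1 := ihi (by omega)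
        have h2 := (hstepmem (j0 + i) (by omega)).2
        have heq : j0 + (i+1) = (j0 + i) + 1 := by omega
        rw [heq, hTsucc]
        push_cast
        linarith
    have hTlb2 : ∀ i : ℕ, T j0 ≤ T (j0 + i) := by
      intro i
      induction i with
      | zero => simp
      | succ i ihi =>
        have heq : j0 + (i+1) = (j0 + i) + 1 := by omega
        rw [heq]
        exact le_trans ihi (hTmono _)
    refine ⟨n0 + j0, by omega, ?_⟩
    intro j hj
    have hβL : (L:ℝ) * (β+β) + (β+β) < ε/2 := by
      have h4 : 2 * ((L:ℝ)+1) * β ≤ ε/4 := by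
        rw [hβdef]
        have hL1 : (0:ℝ) < (L:ℝ)+1 := by positivity
        have heq : 2 * ((L:ℝ)+1) * (ε / (8 * ((L:ℝ)+1))) = ε/4 := by
          field_simp
          ring
        rw [heq]
      nlinarith [hβ.le, (Nat.cast_nonneg L : (0:ℝ) ≤ (L:ℝ)), hε]
    have hTin1 : 1 + θ + ε/2 < T (j0 + j) := lt_of_lt_of_le hj0P (hTlb2 j)
    have hTin2 : T (j0 + j) < 1 + θ + ε := by
      have h1 := hTub j hj
      have h2 : (j:ℝ) * (β + β) ≤ (L:ℝ) * (β + β) := by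
        apply mul_le_mul_of_nonneg_right _ (by linarith)
        exact_mod_cast hj
      linarith
    obtain ⟨z, hz⟩ := hTint (j0 + j)
    have haddeq : n0 + j0 + j = n0 + (j0 + j) := by omega
    have hfr : Int.fract (s (n0 + j0 + j)) = T (j0 + j) - 1 := by
      rw [haddeq, hz]
      rw [Int.fract_eq_iff]
      refine ⟨by linarith, by linarith, ⟨z + 1, by push_cast; ring⟩⟩
    rw [hfr]
    exact ⟨by linarith, by linarith⟩

end PS


open Filter in
/-- For every non-integer real c > 1 and every odd prime p, there is a positive
integer n such that ⌊n^c⌋ is a quadratic non-residue modulo p. -/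
theorem exists_piatetski_shapiro_nonresidue
    (c : ℝ) (hc : 1 < c) (hcint : ∀ k : ℤ, (k : ℝ) ≠ c)
    (p : ℕ) (hp : p.Prime) (hodd : Odd p) :
    ∃ n : ℕ, 0 < n ∧ @legendreSym p ⟨hp⟩ ⌊(n : ℝ) ^ c⌋ = -1 := by
  haveI : Fact p.Prime := ⟨hp⟩
  haveI : NeZero p := ⟨hp.ne_zero⟩
  have hp2 : p ≠ 2 := by
    rintro rfl
    exact (Nat.not_odd_iff_even.mpr (by norm_num)) hodd
  have hp0 : (0:ℝ) < p := by exact_mod_cast hp.pos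
  obtain ⟨b, hb⟩ : ∃ b : ZMod p, ¬IsSquare b :=
    FiniteField.exists_nonsquare (by rwa [ZMod.ringChar_zmod_n])
  obtain ⟨a, ha⟩ : ∃ a : ℕ, a = b.val := ⟨_, rfl⟩
  have halt : a < p := by rw [ha]; exact ZMod.val_lt b
  -- the exponent ceiling
  obtain ⟨K, hK⟩ : ∃ K : ℕ, K = ⌈c⌉₊ := ⟨_, rfl⟩
  have hK2 : 2 ≤ K := by
    rw [hK]
    have : 1 < ⌈c⌉₊ := Nat.lt_ceil.mpr (by exact_mod_cast hc)
    omega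
  have hcK : c < K := by
    rw [hK]
    rcases lt_or_eq_of_le (Nat.le_ceil c) with h | h
    · exact_mod_cast h
    · exact absurd (by push_cast; rw [← h] : (((⌈c⌉₊:ℕ):ℤ):ℝ) = c) (hcint ((⌈c⌉₊:ℕ):ℤ))
  have hKc : (K:ℝ) - 1 < c := by
    have h1 := Nat.ceil_lt_add_one (le_of_lt (lt_trans one_pos hc))
    rw [hK]; push_cast; linarith [h1]
  have hKcast : ((K-1:ℕ):ℝ) = (K:ℝ) - 1 := by
    have h1 : 1 ≤ K := by omega
    push_cast [Nat.cast_sub h1]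
    ring
  -- the sequence
  obtain ⟨f, hf⟩ : ∃ f : ℝ → ℝ, f = fun x : ℝ => (1/(p:ℝ)) * x ^ c := ⟨_, rfl⟩
  obtain ⟨s, hs⟩ : ∃ s : ℕ → ℝ, s = fun n : ℕ => f n := ⟨_, rfl⟩
  have hA : (0:ℝ) < 1/(p:ℝ) := by positivity
  have hprodpos : ∀ j : ℕ, j ≤ K → (0:ℝ) < ∏ i ∈ Finset.range j, (c - i) := by
    intro j hj
    apply Finset.prod_pos
    intro i hi
    have h1 : i < j := Finset.mem_range.mp hi
    have h2 : (i:ℝ) + 1 ≤ (K:ℝ) := by exact_mod_cast Nat.lt_of_lt_of_le h1 hj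
    linarith [hKc]
  have he1 : 0 < c - ((K-1:ℕ):ℝ) := by rw [hKcast]; linarith
  have he2 : c - ((K:ℕ):ℝ) < 0 := by linarith
  -- K-1st difference → ∞
  have hinfty : Tendsto (dN^[K-1] s) atTop atTop := by
    rw [hs]
    have hCpos : 0 < (1/(p:ℝ)) * ∏ i ∈ Finset.range (K-1), (c - i) :=
      mul_pos hA (hprodpos (K-1) (by omega))
    have hbase : Tendsto
        (fun n : ℕ => ((1/(p:ℝ)) * ∏ i ∈ Finset.range (K-1), (c - i)) * (n:ℝ) ^ (c - ((K-1:ℕ):ℝ)))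
        atTop atTop :=
      ((tendsto_rpow_atTop he1).comp tendsto_natCast_atTop_atTop).const_mul_atTop hCpos
    apply tendsto_atTop_mono' atTop ?_ hbase
    filter_upwards [eventually_ge_atTop 1] with n hn
    have hn1 : (1:ℝ) ≤ (n:ℝ) := by exact_mod_cast hn
    obtain ⟨ξ, hξ1, hξ2, hξv⟩ := dR_iter_pow (K-1) (1/(p:ℝ)) c hA
      (by rw [hKcast]; linarith : ((K-1:ℕ):ℝ) - 1 < c) (n:ℝ) hn1
    have heq : dN^[K-1] (fun n : ℕ => f n) n = dR^[K-1] f n := dN_iter_eq f (K-1) n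
    rw [heq, hf, hξv]
    have hle : (n:ℝ) ^ (c - ((K-1:ℕ):ℝ)) ≤ ξ ^ (c - ((K-1:ℕ):ℝ)) :=
      Real.rpow_le_rpow (by positivity) hξ1 he1.le
    have h3 := mul_le_mul_of_nonneg_left hle hCpos.le
    linarith [h3]
  -- K-th difference → 0
  have hnull : Tendsto (dN^[K] s) atTop (nhds 0) := by
    rw [hs]
    have hCpos : 0 < (1/(p:ℝ)) * ∏ i ∈ Finset.range K, (c - i) :=
      mul_pos hA (hprodpos K (le_refl K))
    have hbase : Tendsto
        (fun n : ℕ => ((1/(p:ℝ)) * ∏ i ∈ Finset.range K, (c - i)) * (n:ℝ) ^ (c - ((K:ℕ):ℝ)))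
        atTop (nhds 0) := by
      have h1 : Tendsto (fun x : ℝ => x ^ (-(((K:ℕ):ℝ) - c))) atTop (nhds 0) :=
        tendsto_rpow_neg_atTop (by linarith)
      have hexp : -(((K:ℕ):ℝ) - c) = c - ((K:ℕ):ℝ) := by ring
      rw [hexp] at h1
      have h2 := (h1.comp tendsto_natCast_atTop_atTop).const_mul
        ((1/(p:ℝ)) * ∏ i ∈ Finset.range K, (c - i))
      simpa [Function.comp] using h2
    apply squeeze_zero' ?_ ?_ hbase
    · filter_upwards [eventually_ge_atTop 1] with n hn
      have hn1 : (1:ℝ) ≤ (n:ℝ) := by exact_mod_cast hn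
      obtain ⟨ξ, hξ1, hξ2, hξv⟩ := dR_iter_pow K (1/(p:ℝ)) c hA
        (by linarith : ((K:ℕ):ℝ) - 1 < c) (n:ℝ) hn1
      have heq : dN^[K] (fun n : ℕ => f n) n = dR^[K] f n := dN_iter_eq f K n
      rw [heq, hf, hξv]
      have hξpos : (0:ℝ) < ξ := lt_of_lt_of_le one_pos (le_trans hn1 hξ1)
      have h4 : (0:ℝ) < ξ ^ (c - ((K:ℕ):ℝ)) := Real.rpow_pos_of_pos hξpos _
      positivity
    · filter_upwards [eventually_ge_atTop 1] with n hn
      have hn1 : (1:ℝ) ≤ (n:ℝ) := by exact_mod_cast hn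
      obtain ⟨ξ, hξ1, hξ2, hξv⟩ := dR_iter_pow K (1/(p:ℝ)) c hA
        (by linarith : ((K:ℕ):ℝ) - 1 < c) (n:ℝ) hn1
      have heq : dN^[K] (fun n : ℕ => f n) n = dR^[K] f n := dN_iter_eq f K n
      rw [heq, hf, hξv]
      have hnpos : (0:ℝ) < (n:ℝ) := lt_of_lt_of_le one_pos hn1
      have hle : ξ ^ (c - ((K:ℕ):ℝ)) ≤ (n:ℝ) ^ (c - ((K:ℕ):ℝ)) :=
        Real.rpow_le_rpow_of_nonpos hnpos hξ1 he2.le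
      exact mul_le_mul_of_nonneg_left hle hCpos.le
  -- apply the density engine
  obtain ⟨k, hkK⟩ : ∃ k, K = k + 1 := ⟨K - 1, by omega⟩
  have hK1k : K - 1 = k := by omega
  rw [hK1k] at hinfty
  rw [hkK] at hnull
  have hθ : (0:ℝ) ≤ (a:ℝ) / p := by positivity
  have hε : (0:ℝ) < 1 / (p:ℝ) := by positivity
  have hθε : (a:ℝ) / p + 1 / p ≤ 1 := by
    rw [← add_div, div_le_one hp0]
    exact_mod_cast halt
  obtain ⟨n, hn1, hrun⟩ := runs k s hinfty hnull ((a:ℝ)/p) (1/(p:ℝ)) hθ hε hθε 0 1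
  have hfr := hrun 0 (le_refl 0)
  rw [Nat.add_zero] at hfr
  refine ⟨n, hn1, ?_⟩
  obtain ⟨m, hm⟩ : ∃ m : ℤ, m = ⌊s n⌋ := ⟨_, rfl⟩
  have hsval : ((m:ℝ)) + Int.fract (s n) = s n := by rw [hm]; exact Int.floor_add_fract (s n)
  have hnc : (n:ℝ) ^ c = (p:ℝ) * s n := by
    rw [hs, hf]
    field_simp
  have h3' : (p:ℝ) * s n = (p:ℝ) * ((m:ℝ) + Int.fract (s n)) := by rw [hsval]
  have h3 : (n:ℝ) ^ c = (p:ℝ) * m + (p:ℝ) * Int.fract (s n) := by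
    rw [hnc, h3']
    ring
  have h2low : (a:ℝ) < p * Int.fract (s n) := by
    have h1 := hfr.1
    rw [div_lt_iff₀ hp0] at h1
    linarith [mul_comm (Int.fract (s n)) ((p:ℝ))]
  have h2high : p * Int.fract (s n) < (a:ℝ) + 1 := by
    have h1 := hfr.2
    have h4 := mul_lt_mul_of_pos_left h1 hp0
    have heq : (p:ℝ) * ((a:ℝ)/p + 1/p) = (a:ℝ) + 1 := by field_simp
    rw [heq] at h4
    exact h4
  have key : ⌊(n:ℝ) ^ c⌋ = (p:ℤ) * m + (a:ℤ) := by
    rw [Int.floor_eq_iff]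
    constructor
    · push_cast
      linarith [h2low]
    · push_cast
      linarith [h2high]
  rw [key]
  have hcast : (((p:ℤ) * m + (a:ℤ) : ℤ) : ZMod p) = b := by
    push_cast
    simp only [ZMod.natCast_self, zero_mul, zero_add]
    rw [ha]
    exact ZMod.natCast_rightInverse b
  rw [legendreSym.eq_neg_one_iff, hcast]
  exact hb
end
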